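/- Division with remainder principle: Let φ: R → R[z] be a G_a-coaction, s, a ∈ R, and let c ∈ R^{G_a} be the highest coefficient of φ(s) (of degree d = deg(s)). Then there exist r, b ∈ R and m ∈ ℕ such that c^m · a = r·s + b, with deg(r) ≤ deg(a) − deg(s) and deg(b) ≤ deg(s) − 1. -/

import Mathlib

open Polynomial

def IsGaCoaction {R : Type*} [CommRing R] (φ : R →+* Polynomial R) : Prop :=
  (∀ s : R, (φ s).eval 0 = s) ∧
  (∀ s : R, (φ s).map φ =
      (φ s).eval₂ ((Polynomial.C : Polynomial R →+* Polynomial (Polynomial R)).comp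
        Polynomial.C) (Polynomial.X + Polynomial.C Polynomial.X))

section Aux

variable {T : Type*} [CommRing T]

private lemma deg_lt_helper' {p q : T[X]} (hle : p.degree ≤ q.degree)
    (hq : q ≠ 0) (hc : p.coeff q.natDegree = 0) : p.degree < q.degree := by
  rcases eq_or_ne p 0 with rfl | hp
  · simpa [degree_eq_bot, bot_lt_iff_ne_bot, Ne, degree_eq_bot] using hq
  · refine lt_of_le_of_ne hle fun h => ?_
    have hnd : p.natDegree = q.natDegree := natDegree_eq_natDegree h
    exact hp (leadingCoeff_eq_zero.mp (by rwa [leadingCoeff, hnd]))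

private lemma pseudoDiv_aux (S : T[X]) (hS : S ≠ 0) :
    ∀ (n : ℕ) (A : T[X]), A.degree < n →
      ∃ (m : ℕ) (Q B : T[X]), C (S.leadingCoeff ^ m) * A = Q * S + B ∧
        B.degree < S.degree ∧ Q.degree + S.degree ≤ A.degree := by
  intro n
  induction n with
  | zero =>
    intro A hA
    have : A = 0 := degree_eq_bot.mp
      (by exact_mod_cast Nat.WithBot.lt_zero_iff.mp (by exact_mod_cast hA))
    subst this
    exact ⟨0, 0, 0, by simp, by simpa [bot_lt_iff_ne_bot, degree_eq_bot] using hS, by simp⟩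
  | succ n ih =>
    intro A hA
    rcases lt_or_ge A.degree S.degree with hlt | hge
    · exact ⟨0, 0, A, by simp, hlt, by simp⟩
    have hA0 : A ≠ 0 := by
      intro h0
      rw [h0, degree_zero] at hge
      exact hS (degree_eq_bot.mp (le_bot_iff.mp hge))
    have hnd : S.natDegree ≤ A.natDegree := natDegree_le_natDegree hge
    set k := A.natDegree - S.natDegree with hk
    set A₁ := C S.leadingCoeff * A - C A.leadingCoeff * (X ^ k * S) with hA₁
    have hdegXS : (C A.leadingCoeff * (X ^ k * S)).degree ≤ (A.natDegree : WithBot ℕ) := by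
      calc (C A.leadingCoeff * (X ^ k * S)).degree
          = (C A.leadingCoeff * X ^ k * S).degree := by rw [mul_assoc]
        _ ≤ (C A.leadingCoeff * X ^ k).degree + S.degree := degree_mul_le _ _
        _ ≤ (k : WithBot ℕ) + (S.natDegree : WithBot ℕ) :=
            add_le_add (degree_C_mul_X_pow_le _ _) degree_le_natDegree
        _ = ((k + S.natDegree : ℕ) : WithBot ℕ) := by exact_mod_cast rfl
        _ = (A.natDegree : WithBot ℕ) := by rw [hk, Nat.sub_add_cancel hnd]
    have hA₁deg : A₁.degree < A.degree := by
      apply deg_lt_helper' _ hA0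
      · rw [hA₁, coeff_sub, coeff_C_mul, coeff_C_mul]
        have hx : (X ^ k * S).coeff A.natDegree = S.coeff S.natDegree := by
          have h2 : A.natDegree = S.natDegree + k := by omega
          rw [h2, coeff_X_pow_mul]
        rw [hx, ← leadingCoeff, ← leadingCoeff, mul_comm, sub_self]
      · rw [hA₁]
        refine le_trans (degree_sub_le _ _) (max_le ?_ ?_)
        · exact le_trans (degree_mul_le _ _) (by simpa using add_le_add degree_C_le le_rfl)
        · exact le_trans hdegXS (le_of_eq (degree_eq_natDegree hA0).symm)
    have hA₁n : A₁.degree < (n : WithBot ℕ) := by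
      refine lt_of_lt_of_le hA₁deg ?_
      rw [degree_eq_natDegree hA0] at hA ⊢
      exact_mod_cast Nat.lt_succ_iff.mp (by exact_mod_cast hA)
    obtain ⟨m₁, Q₁, B₁, heq, hB₁, hQ₁⟩ := ih A₁ hA₁n
    refine ⟨m₁ + 1, Q₁ + C (S.leadingCoeff ^ m₁ * A.leadingCoeff) * X ^ k, B₁, ?_, hB₁, ?_⟩
    · rw [hA₁] at heq
      simp only [C_mul, pow_succ] at heq ⊢
      linear_combination heq
    · have h1 : Q₁.degree + S.degree ≤ A.degree := hQ₁.trans hA₁deg.le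
      have h2 : (C (S.leadingCoeff ^ m₁ * A.leadingCoeff) * X ^ k).degree + S.degree
          ≤ A.degree := by
        calc (C (S.leadingCoeff ^ m₁ * A.leadingCoeff) * X ^ k).degree + S.degree
            ≤ (k : WithBot ℕ) + (S.natDegree : WithBot ℕ) :=
              add_le_add (degree_C_mul_X_pow_le _ _) degree_le_natDegree
          _ = ((k + S.natDegree : ℕ) : WithBot ℕ) := by exact_mod_cast rfl
          _ = (A.natDegree : WithBot ℕ) := by rw [hk, Nat.sub_add_cancel hnd]
          _ = A.degree := (degree_eq_natDegree hA0).symm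
      refine le_trans (add_le_add_left (degree_add_le _ _) S.degree) ?_
      rcases le_total Q₁.degree (C (S.leadingCoeff ^ m₁ * A.leadingCoeff) * X ^ k).degree with h | h
      · rw [max_eq_right h]; exact h2
      · rw [max_eq_left h]; exact h1

private lemma killQ_aux (S : T[X]) :
    ∀ (n : ℕ) (Q : T[X]), Q.natDegree ≤ n → (Q * S).degree < S.degree →
      ∃ N : ℕ, C S.leadingCoeff ^ N * Q = 0 := by
  intro n
  induction n with
  | zero =>
    intro Q hQn h
    rcases eq_or_ne Q 0 with rfl | hQ0
    · exact ⟨0, by simp⟩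
    have hS0 : S ≠ 0 := by
      intro h0; rw [h0] at h; simp at h
    have htop : Q.leadingCoeff * S.leadingCoeff = 0 := by
      have h1 : S.degree ≤ (↑(Q.natDegree + S.natDegree) : WithBot ℕ) := by
        exact_mod_cast le_trans (degree_le_natDegree) (by exact_mod_cast Nat.le_add_left _ _)
      have := coeff_eq_zero_of_degree_lt (lt_of_lt_of_le h h1)
      rwa [coeff_mul_degree_add_degree] at this
    refine ⟨1, ?_⟩
    have hQ : Q = C Q.leadingCoeff := by
      have h0 : Q.natDegree = 0 := Nat.le_zero.mp hQn
      rw [leadingCoeff, h0]; exact Polynomial.eq_C_of_natDegree_le_zero hQn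
    rw [pow_one, hQ, ← C_mul, mul_comm, htop, C_0]
  | succ n ih =>
    intro Q hQn h
    rcases eq_or_ne Q 0 with rfl | hQ0
    · exact ⟨0, by simp⟩
    have hS0 : S ≠ 0 := by
      intro h0; rw [h0] at h; simp at h
    have htop : Q.leadingCoeff * S.leadingCoeff = 0 := by
      have h1 : S.degree ≤ (↑(Q.natDegree + S.natDegree) : WithBot ℕ) := by
        exact_mod_cast le_trans (degree_le_natDegree) (by exact_mod_cast Nat.le_add_left _ _)
      have := coeff_eq_zero_of_degree_lt (lt_of_lt_of_le h h1)
      rwa [coeff_mul_degree_add_degree] at this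
    set Q₁ := C S.leadingCoeff * Q with hQ₁def
    rcases eq_or_ne Q₁ 0 with hQ₁ | hQ₁
    · exact ⟨1, by rw [pow_one]; exact hQ₁⟩
    have hcQ₁ : Q₁.coeff Q.natDegree = 0 := by
      rw [hQ₁def, coeff_C_mul, ← leadingCoeff, mul_comm, htop]
    have hd₁ : Q₁.natDegree ≤ n := by
      have hle : Q₁.natDegree ≤ Q.natDegree := by
        simpa using natDegree_mul_le (p := C S.leadingCoeff) (q := Q)
      rcases lt_or_eq_of_le hle with hlt | heq
      · omega
      · exact absurd (leadingCoeff_eq_zero.mp (by rwa [leadingCoeff, heq])) hQ₁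
    have hdeg₁ : (Q₁ * S).degree < S.degree := by
      refine lt_of_le_of_lt ?_ h
      calc (Q₁ * S).degree = (C S.leadingCoeff * (Q * S)).degree := by rw [hQ₁def, mul_assoc]
        _ ≤ (C S.leadingCoeff).degree + (Q * S).degree := degree_mul_le _ _
        _ ≤ 0 + (Q * S).degree := add_le_add_left degree_C_le _
        _ = (Q * S).degree := by rw [zero_add]
    obtain ⟨N, hN⟩ := ih Q₁ hd₁ hdeg₁
    exact ⟨N + 1, by rw [pow_succ, mul_assoc]; exact hN⟩

noncomputable def Ecoact : T[X] →+* (T[X])[X] :=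
  eval₂RingHom ((Polynomial.C : T[X] →+* (T[X])[X]).comp Polynomial.C) (X + C X)

lemma Ecoact_apply (P : T[X]) :
    Ecoact P = P.eval₂ ((Polynomial.C : T[X] →+* (T[X])[X]).comp Polynomial.C) (X + C X) := rfl

private lemma degree_XCX_pow_le (j : ℕ) :
    ((X + C X : (T[X])[X]) ^ j).degree ≤ (j : WithBot ℕ) := by
  refine le_trans degree_le_natDegree ?_
  have h0 := natDegree_pow_le (p := (X + C X : (T[X])[X])) (n := j)
  have h1 : (X + C X : (T[X])[X]).natDegree ≤ 1 := by
    refine natDegree_add_le_iff_left _ _ (by simp) |>.mpr ?_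
    exact natDegree_X_le
  exact_mod_cast le_trans h0 (by nlinarith)

private lemma Ecoact_coeff_top [Nontrivial T] (P : T[X]) (n : ℕ) (hn : P.natDegree ≤ n) :
    (Ecoact P).coeff n = C (P.coeff n) := by
  have hmon : ∀ j, ((X + C X : (T[X])[X]) ^ j).coeff j = 1 := by
    intro j
    have h1 : ((X + (C X) : (T[X])[X])).Monic := monic_X_add_C X
    have h2 := h1.pow (n := j)
    have h3 : ((X + C X : (T[X])[X]) ^ j).natDegree = j := by
      rw [h1.natDegree_pow, natDegree_X_add_C, mul_one]
    simpa [h3] using h2.coeff_natDegree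
  rw [Ecoact_apply, eval₂_eq_sum, sum_def, finset_sum_coeff]
  rw [Finset.sum_eq_single n]
  · rw [RingHom.comp_apply, coeff_C_mul, hmon, mul_one]
  · intro b hb hbn
    rw [RingHom.comp_apply, coeff_C_mul]
    have hblt : b < n := lt_of_le_of_ne (le_trans (le_natDegree_of_mem_supp b hb) hn) hbn
    rw [coeff_eq_zero_of_degree_lt (lt_of_le_of_lt (degree_XCX_pow_le b)
      (by exact_mod_cast hblt)), mul_zero]
  · intro hns
    rw [notMem_support_iff.mp hns]; simp

private lemma Ecoact_degree_le (P : T[X]) : (Ecoact P).degree ≤ P.degree := by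
  rw [Ecoact_apply, eval₂_eq_sum, sum_def]
  refine le_trans (degree_sum_le _ _) (Finset.sup_le fun j hj => ?_)
  refine le_trans (degree_mul_le _ _) ?_
  simp only [RingHom.comp_apply]
  refine le_trans (add_le_add degree_C_le (degree_XCX_pow_le j)) ?_
  rw [zero_add]
  exact le_degree_of_ne_zero (mem_support_iff.mp hj)

private lemma Ecoact_eval_zero (P : T[X]) : (Ecoact P).eval 0 = P := by
  have h := hom_eval₂ P ((Polynomial.C : T[X] →+* (T[X])[X]).comp Polynomial.C)
    (evalRingHom (0 : T[X])) (X + C X)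
  have h1 : (evalRingHom (0 : T[X])).comp
      ((Polynomial.C : T[X] →+* (T[X])[X]).comp Polynomial.C) = Polynomial.C := by
    ext x
    simp
  have h2 : (evalRingHom (0 : T[X])) (X + C X) = X := by simp
  rw [Ecoact_apply]
  calc eval 0 (P.eval₂ _ (X + C X)) = evalRingHom (0:T[X]) (P.eval₂ _ (X + C X)) := rfl
    _ = eval₂ Polynomial.C X P := by rw [h, h1, h2]
    _ = P := eval₂_C_X

end Aux

/-- division with remainder principle.  With `c` the highest coefficient of
`φ s` (which is an invariant), there are `r, b ∈ R` and `m ∈ ℕ` with `c^m * a = r*s + b`,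
`deg r ≤ deg a - deg s` (stated additively, with the convention `deg 0 = -∞ = ⊥`) and
`deg b ≤ deg s - 1` (i.e. `b = 0` or `deg b < deg s`). -/
theorem stmt1 {K R : Type*} [CommRing K] [CommRing R] [Algebra K R]
    (φ : R →ₐ[K] Polynomial R) (hφ : IsGaCoaction φ.toRingHom)
    (s a : R) (c : R) (hc : c = (φ s).leadingCoeff) :
    ∃ (r b : R) (m : ℕ),
      c ^ m * a = r * s + b ∧
      (φ r).degree + (φ s).degree ≤ (φ a).degree ∧
      (b = 0 ∨ (φ b).degree < (φ s).degree) := by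
  obtain ⟨hcounit, hcoass⟩ := hφ
  have hcounit' : ∀ x : R, (φ x).eval 0 = x := hcounit
  rcases subsingleton_or_nontrivial R with hR | hR
  · refine ⟨0, 0, 0, Subsingleton.elim _ _, ?_, Or.inl rfl⟩
    have : φ (0:R) = 0 := map_zero φ
    rw [this, degree_zero, WithBot.bot_add]
    exact bot_le
  rcases eq_or_ne (φ s) 0 with hS0 | hS0
  · have hc0 : c = 0 := by rw [hc, hS0, leadingCoeff_zero]
    refine ⟨0, 0, 1, by rw [hc0]; ring, ?_, Or.inl rfl⟩
    rw [map_zero φ, degree_zero, WithBot.bot_add]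
    exact bot_le
  -- main case
  have hcne : c ≠ 0 := by
    rw [hc]; exact leadingCoeff_ne_zero.mpr hS0
  have hmapE : ∀ x : R, (φ x).map φ.toRingHom = Ecoact (φ x) := by
    intro x
    rw [Ecoact_apply]
    exact hcoass x
  -- invariance of c
  have hCc : φ c = C c := by
    have h1 := congrArg (fun P => P.coeff (φ s).natDegree) (hmapE s)
    simp only [coeff_map] at h1
    rw [Ecoact_coeff_top (φ s) (φ s).natDegree le_rfl] at h1
    rw [← leadingCoeff, ← hc] at h1
    exact_mod_cast h1
  -- pseudo-division
  obtain ⟨m, Q, B, heq, hB, hQ⟩ := pseudoDiv_aux (φ s) hS0 ((φ a).natDegree + 1) (φ a)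
    (lt_of_le_of_lt degree_le_natDegree (by exact_mod_cast Nat.lt_succ_self _))
  rw [← hc] at heq
  -- map both structure maps over the division equation
  have hΦeq : C (φ (c ^ m)) * (φ a).map φ.toRingHom
      = Q.map φ.toRingHom * (φ s).map φ.toRingHom + B.map φ.toRingHom := by
    have := congrArg (Polynomial.map φ.toRingHom) heq
    rwa [Polynomial.map_add, Polynomial.map_mul, Polynomial.map_mul, map_C] at this
  have hEeq : C (C (c ^ m)) * Ecoact (φ a) = Ecoact Q * Ecoact (φ s) + Ecoact B := by
    have := congrArg (Ecoact (T := R)) heq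
    rw [map_add, map_mul, map_mul] at this
    rwa [show Ecoact (C (c ^ m) : R[X]) = C (C (c ^ m)) from eval₂_C _ _] at this
  rw [hmapE a, hmapE s, map_pow, hCc, ← C_pow] at hΦeq
  -- subtract
  have hsub : (Q.map φ.toRingHom - Ecoact Q) * Ecoact (φ s)
      = Ecoact B - B.map φ.toRingHom := by
    have := hΦeq.symm.trans hEeq
    ring_nf at this ⊢
    linear_combination this
  -- degree facts about S' := Ecoact (φ s) = map φ (φ s)
  have hlcS' : (Ecoact (φ s)).leadingCoeff = C c := by
    rw [← hmapE s]
    have hdle : ((φ s).map φ.toRingHom).degree ≤ (φ s).degree := degree_map_le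
    have hcoe : ((φ s).map φ.toRingHom).coeff (φ s).natDegree = C c := by
      rw [coeff_map, ← leadingCoeff, ← hc]; exact_mod_cast hCc
    have hge : ((φ s).natDegree : WithBot ℕ) ≤ ((φ s).map φ.toRingHom).degree :=
      le_degree_of_ne_zero (by rw [hcoe]; exact fun h => hcne (by simpa using h))
    have hdeq : ((φ s).map φ.toRingHom).degree = (φ s).degree :=
      le_antisymm hdle (by rw [degree_eq_natDegree hS0]; exact hge)
    rw [leadingCoeff, natDegree_eq_natDegree hdeq, hcoe]
  have hdegS' : (Ecoact (φ s)).degree = (φ s).degree := by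
    rw [← hmapE s]
    refine le_antisymm degree_map_le ?_
    rw [degree_eq_natDegree hS0]
    refine le_degree_of_ne_zero ?_
    rw [coeff_map, ← leadingCoeff, ← hc]
    exact fun h => hcne (by have hCc' : φ.toRingHom c = C c := hCc
                            rw [hCc'] at h; simpa using h)
  -- degree of RHS of hsub is < degree S'
  have hrhs : (Ecoact B - B.map φ.toRingHom).degree < (Ecoact (φ s)).degree := by
    rw [hdegS']
    refine lt_of_le_of_lt (degree_sub_le _ _) ?_
    rw [max_lt_iff]
    exact ⟨lt_of_le_of_lt (Ecoact_degree_le B) hB, lt_of_le_of_lt degree_map_le hB⟩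
  obtain ⟨N, hN⟩ := killQ_aux (Ecoact (φ s)) (Q.map φ.toRingHom - Ecoact Q).natDegree
    (Q.map φ.toRingHom - Ecoact Q) le_rfl (by rw [hsub]; exact hrhs)
  rw [hlcS'] at hN
  -- derive the two key equations
  have hQeq : C (C c) ^ N * Q.map φ.toRingHom = C (C c) ^ N * Ecoact Q := by
    rw [mul_sub] at hN
    exact sub_eq_zero.mp hN
  have hBeq : C (C c) ^ N * B.map φ.toRingHom = C (C c) ^ N * Ecoact B := by
    have h1 : C (C c) ^ N * ((Q.map φ.toRingHom - Ecoact Q) * Ecoact (φ s))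
        = C (C c) ^ N * (Ecoact B - B.map φ.toRingHom) := by rw [hsub]
    rw [← mul_assoc, hN, zero_mul, mul_sub] at h1
    exact (sub_eq_zero.mp h1.symm).symm
  -- evaluate outer variable at 0
  have hφQ : φ (c ^ N * Q.coeff 0) = C (c ^ N) * Q := by
    have := congrArg (Polynomial.eval (0 : R[X])) hQeq
    rw [eval_mul, eval_mul, Ecoact_eval_zero] at this
    rw [show Polynomial.eval (0:R[X]) (C (C c) ^ N) = C c ^ N by simp] at this
    rw [← coeff_zero_eq_eval_zero, coeff_map] at this
    rw [map_mul, map_pow, hCc, C_pow]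
    exact this
  have hφB : φ (c ^ N * B.coeff 0) = C (c ^ N) * B := by
    have := congrArg (Polynomial.eval (0 : R[X])) hBeq
    rw [eval_mul, eval_mul, Ecoact_eval_zero] at this
    rw [show Polynomial.eval (0:R[X]) (C (C c) ^ N) = C c ^ N by simp] at this
    rw [← coeff_zero_eq_eval_zero, coeff_map] at this
    rw [map_mul, map_pow, hCc, C_pow]
    exact this
  refine ⟨c ^ N * Q.coeff 0, c ^ N * B.coeff 0, m + N, ?_, ?_, ?_⟩
  · -- the equation
    have h0 := congrArg (Polynomial.eval (0 : R)) heq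
    rw [eval_add, eval_mul, eval_mul, eval_C, hcounit' a, hcounit' s,
      ← coeff_zero_eq_eval_zero, ← coeff_zero_eq_eval_zero] at h0
    calc c ^ (m + N) * a = c ^ N * (c ^ m * a) := by ring
      _ = c ^ N * (Q.coeff 0 * s + B.coeff 0) := by rw [h0]
      _ = c ^ N * Q.coeff 0 * s + c ^ N * B.coeff 0 := by ring
  · -- degree bound for r
    rw [hφQ]
    refine le_trans (add_le_add_left ?_ (φ s).degree) hQ
    calc (C (c ^ N) * Q).degree ≤ (C (c ^ N)).degree + Q.degree := degree_mul_le _ _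
      _ ≤ 0 + Q.degree := add_le_add_left degree_C_le _
      _ = Q.degree := zero_add _
  · -- degree bound for b
    rcases eq_or_ne (c ^ N * B.coeff 0) 0 with hb0 | hb0
    · exact Or.inl hb0
    · refine Or.inr ?_
      rw [hφB]
      refine lt_of_le_of_lt ?_ hB
      calc (C (c ^ N) * B).degree ≤ (C (c ^ N)).degree + B.degree := degree_mul_le _ _
        _ ≤ 0 + B.degree := add_le_add_left degree_C_le _
        _ = B.degree := zero_add _
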